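/- Let X₁,…,Xₙ be independent exponentially distributed random variables with rate 1, and let b, c ≥ 0. Then P(X₁ > b·(X₂ + ⋯ + Xₙ) + b·c) = (1/(1+b))^(n-1) · e^(−b·c). -/

import Mathlib

open MeasureTheory ProbabilityTheory Finset

open scoped ENNReal

lemma aux_expPDF_meas (r : ℝ) : Measurable (exponentialPDF r) :=
  (measurable_exponentialPDFReal r).ennreal_ofReal

lemma aux_exp_survival {t : ℝ} (ht : 0 ≤ t) :
    expMeasure 1 (Set.Ioi t) = ENNReal.ofReal (Real.exp (-t)) := by
  have hP : IsProbabilityMeasure (expMeasure 1) := isProbabilityMeasure_expMeasure one_pos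
  have hIic : expMeasure 1 (Set.Iic t) = ENNReal.ofReal (1 - Real.exp (-t)) := by
    rw [show expMeasure 1 = volume.withDensity (exponentialPDF 1) from rfl,
      withDensity_apply _ measurableSet_Iic,
      lintegral_exponentialPDF_eq_antiDeriv one_pos, if_pos ht, one_mul]
  have : Set.Ioi t = (Set.Iic t)ᶜ := by ext x; simp
  rw [this, measure_compl measurableSet_Iic (measure_ne_top _ _), hIic, measure_univ]
  rw [← ENNReal.ofReal_one, ← ENNReal.ofReal_sub _
    (by nlinarith [Real.exp_le_one_iff.2 (by linarith : -t ≤ 0)])]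
  norm_num

lemma aux_exp_laplace {b : ℝ} (hb : 0 ≤ b) :
    ∫⁻ x, ENNReal.ofReal (Real.exp (-(b * x))) ∂(expMeasure 1)
      = ENNReal.ofReal (1 / (1 + b)) := by
  have h1b : 0 < 1 + b := by linarith
  have hmeas : Measurable fun x => ENNReal.ofReal (Real.exp (-(b * x))) :=
    ((measurable_const_mul b).neg.exp.ennreal_ofReal)
  rw [show expMeasure 1 = volume.withDensity (exponentialPDF 1) from rfl,
    lintegral_withDensity_eq_lintegral_mul _ (aux_expPDF_meas 1) hmeas]
  have hpt : ∀ x, (exponentialPDF 1 * fun x => ENNReal.ofReal (Real.exp (-(b * x)))) x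
      = ENNReal.ofReal (1 / (1 + b)) * exponentialPDF (1 + b) x := by
    intro x
    simp only [Pi.mul_apply]
    rcases lt_or_ge x 0 with hx | hx
    · rw [exponentialPDF_of_neg hx, exponentialPDF_of_neg hx, zero_mul, mul_zero]
    · rw [exponentialPDF_of_nonneg hx, exponentialPDF_of_nonneg hx,
        ← ENNReal.ofReal_mul (by positivity), ← ENNReal.ofReal_mul (by positivity)]
      congr 1
      rw [one_mul, ← Real.exp_add, show -(1 * x) + -(b * x) = -((1 + b) * x) by ring]
      field_simp
  rw [lintegral_congr hpt, lintegral_const_mul _ (aux_expPDF_meas (1 + b)),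
    lintegral_exponentialPDF_eq_one h1b, mul_one]

lemma aux_lintegral_prod_indep {Ω ι : Type*} [MeasurableSpace Ω] (μ : Measure Ω)
    [IsProbabilityMeasure μ] {X : ι → Ω → ℝ} (hmeas : ∀ i, Measurable (X i))
    (hind : iIndepFun X μ) (f : ℝ → ℝ≥0∞) (hf : Measurable f)
    (s : Finset ι) :
    ∫⁻ ω, ∏ i ∈ s, f (X i ω) ∂μ = ∏ i ∈ s, ∫⁻ ω, f (X i ω) ∂μ := by
  classical
  have hg : iIndepFun (fun i => f ∘ X i) μ :=
    hind.comp (fun _ => f) (fun _ => hf)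
  induction s using Finset.induction_on with
  | empty => simp
  | @insert a t hi ih =>
    simp only [Finset.prod_insert hi]
    rw [← ih]
    have hIF : ProbabilityTheory.IndepFun (∏ j ∈ t, (f ∘ X j)) (f ∘ X a) μ :=
      hg.indepFun_finsetProd_of_notMem (fun i => hf.comp (hmeas i)) hi
    have h1 : Measurable (f ∘ X a) := hf.comp (hmeas a)
    have h2 : Measurable (∏ j ∈ t, (f ∘ X j)) := by
      rw [show (∏ j ∈ t, (f ∘ X j)) = fun ω => ∏ j ∈ t, f (X j ω) by
        ext ω; simp [Finset.prod_apply]]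
      exact Finset.measurable_prod _ fun i _ => hf.comp (hmeas i)
    have := lintegral_mul_eq_lintegral_mul_lintegral_of_indepFun h2 h1 hIF
    simp only [Pi.mul_apply, Finset.prod_apply, Function.comp_apply] at this
    calc ∫⁻ ω, f (X a ω) * ∏ i ∈ t, f (X i ω) ∂μ
        = ∫⁻ ω, (∏ i ∈ t, f (X i ω)) * f (X a ω) ∂μ := by
          congr 1; ext ω; rw [mul_comm]
      _ = (∫⁻ ω, ∏ i ∈ t, f (X i ω) ∂μ) * ∫⁻ ω, f (X a ω) ∂μ := this
      _ = (∫⁻ ω, f (X a ω) ∂μ) * ∫⁻ ω, ∏ i ∈ t, f (X i ω) ∂μ := mul_comm _ _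

theorem stmt_3 {Ω : Type*} [MeasurableSpace Ω] (μ : Measure Ω) [IsProbabilityMeasure μ]
    (n : ℕ) (hn : 0 < n) (b c : ℝ) (hb : 0 ≤ b) (hc : 0 ≤ c)
    (X : Fin n → Ω → ℝ)
    (hmeas : ∀ i, Measurable (X i))
    (hind : iIndepFun X μ)
    (hlaw : ∀ i, μ.map (X i) = expMeasure 1) :
    μ {ω | X ⟨0, hn⟩ ω >
        b * (∑ i ∈ Finset.univ.erase ⟨0, hn⟩, X i ω) + b * c} =
      ENNReal.ofReal ((1 / (1 + b)) ^ (n - 1) * Real.exp (-(b * c))) := by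
  classical
  haveI hP : IsProbabilityMeasure (expMeasure 1) := isProbabilityMeasure_expMeasure one_pos
  set i0 : Fin n := ⟨0, hn⟩ with hi0
  set s : Finset (Fin n) := Finset.univ.erase i0 with hs
  set S : Ω → ℝ := fun ω => ∑ i ∈ s, X i ω with hSdef
  have hSmeas : Measurable S := Finset.measurable_sum _ fun i _ => hmeas i
  set f : ℝ → ℝ≥0∞ := fun x => ENNReal.ofReal (Real.exp (-(b * x))) with hfdef
  have hf : Measurable f := ((measurable_const_mul b).neg.exp.ennreal_ofReal)
  -- independence of S and X i0
  have hIndep : IndepFun S (X i0) μ := by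
    have h := hind.indepFun_finsetSum_of_notMem hmeas (Finset.notMem_erase i0 Finset.univ)
    have heq : (∑ j ∈ s, X j) = S := by ext ω; simp [hSdef, Finset.sum_apply]
    rwa [heq] at h
  -- rewrite event as preimage
  have hset : {ω | X i0 ω > b * S ω + b * c}
      = (fun ω => (S ω, X i0 ω)) ⁻¹' {p : ℝ × ℝ | b * p.1 + b * c < p.2} := rfl
  have hE : MeasurableSet {p : ℝ × ℝ | b * p.1 + b * c < p.2} :=
    measurableSet_lt (((measurable_fst.const_mul b).add_const _)) measurable_snd
  have hmap : μ.map (fun ω => (S ω, X i0 ω)) = (μ.map S).prod (μ.map (X i0)) :=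
    (ProbabilityTheory.indepFun_iff_map_prod_eq_prod_map_map hSmeas.aemeasurable
      (hmeas i0).aemeasurable).1 hIndep
  rw [hset, ← Measure.map_apply (hSmeas.prodMk (hmeas i0)) hE, hmap, hlaw i0,
    Measure.prod_apply hE]
  -- a.e. nonnegativity of S under its law
  have hXae : ∀ i, ∀ᵐ ω ∂μ, 0 ≤ X i ω := by
    intro i
    have h0 : μ (X i ⁻¹' Set.Iio 0) = 0 := by
      rw [← Measure.map_apply (hmeas i) measurableSet_Iio, hlaw i,
        show expMeasure 1 = volume.withDensity (exponentialPDF 1) from rfl,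
        withDensity_apply _ measurableSet_Iio]
      exact lintegral_exponentialPDF_of_nonpos le_rfl
    rw [MeasureTheory.ae_iff]
    convert h0 using 2
    ext ω; simp
  have hae : ∀ᵐ x ∂(μ.map S), 0 ≤ x := by
    rw [MeasureTheory.ae_map_iff hSmeas.aemeasurable measurableSet_Ici]
    have hall : ∀ᵐ ω ∂μ, ∀ i, 0 ≤ X i ω := ae_all_iff.2 hXae
    filter_upwards [hall] with ω hω
    exact Finset.sum_nonneg fun i _ => hω i
  -- compute the slice integral
  have hcongr : ∫⁻ x, (expMeasure 1) (Prod.mk x ⁻¹' {p : ℝ × ℝ | b * p.1 + b * c < p.2})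
        ∂(μ.map S)
      = ∫⁻ x, ENNReal.ofReal (Real.exp (-(b * c))) * f x ∂(μ.map S) := by
    refine lintegral_congr_ae ?_
    filter_upwards [hae] with x hx
    have hpre : Prod.mk x ⁻¹' {p : ℝ × ℝ | b * p.1 + b * c < p.2}
        = Set.Ioi (b * x + b * c) := by ext y; simp [Set.mem_Ioi]
    rw [hpre, aux_exp_survival (by positivity), hfdef,
      ← ENNReal.ofReal_mul (Real.exp_nonneg _), ← Real.exp_add]
    congr 2
    ring
  rw [hcongr, lintegral_const_mul _ hf]
  -- Laplace transform of S
  have hLS : ∫⁻ x, f x ∂(μ.map S) = ENNReal.ofReal (1 / (1 + b)) ^ (n - 1) := by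
    rw [lintegral_map hf hSmeas]
    have hpt : ∀ ω, f (S ω) = ∏ i ∈ s, f (X i ω) := by
      intro ω
      rw [hfdef, hSdef]
      simp only
      rw [Finset.mul_sum, ← Finset.sum_neg_distrib, Real.exp_sum,
        ENNReal.ofReal_prod_of_nonneg fun i _ => (Real.exp_pos _).le]
    rw [lintegral_congr hpt, aux_lintegral_prod_indep μ hmeas hind f hf s]
    have hfac : ∀ i ∈ s, ∫⁻ ω, f (X i ω) ∂μ = ENNReal.ofReal (1 / (1 + b)) := by
      intro i _
      rw [← lintegral_map hf (hmeas i), hlaw i]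
      exact aux_exp_laplace hb
    rw [Finset.prod_congr rfl hfac, Finset.prod_const]
    congr 1
    rw [hs, Finset.card_erase_of_mem (Finset.mem_univ _), Finset.card_univ, Fintype.card_fin]
  rw [hLS, ← ENNReal.ofReal_pow (by positivity), ← ENNReal.ofReal_mul (Real.exp_nonneg _),
    mul_comm]
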